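/- arXiv:1710.03863 — 5 statements merged into one kernel-verified Lean document; each statement's English description precedes it below -/
import Mathlib

section
/- If X is a Gaussian random variable with mean μ and variance 1, and H_k denotes the Hermite polynomial of degree k defined by H_k(x) = (-1)^k exp(x²/2) d^k/dx^k [exp(-x²/2)], then E[H_k(X)] = μ^k. -/
open MeasureTheory ProbabilityTheory Polynomial Real Filter

noncomputable def Gden (μ : ℝ) (x : ℝ) : ℝ := Real.exp (-(x - μ) ^ 2 / 2)

lemma gaussianPDFReal_one (μ : ℝ) :
    gaussianPDFReal μ 1 = fun x => (√(2 * π))⁻¹ * Gden μ x := by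
  funext x
  simp [gaussianPDFReal, Gden]

lemma hasDerivAt_Gden (μ x : ℝ) : HasDerivAt (Gden μ) (-(x - μ) * Gden μ x) x := by
  have h1 : HasDerivAt (fun x : ℝ => -(x - μ) ^ 2 / 2) (-(x - μ)) x := by
    have := (((hasDerivAt_id x).sub_const μ).pow 2).neg.div_const 2
    convert this using 1
    · rfl
    · rfl
    · funext y; simp
    · simp
      ring
  have := h1.exp
  convert this using 1
  unfold Gden
  ring
  unfold Gden
  ring

lemma integrable_pow_gauss (n : ℕ) : Integrable fun x : ℝ => x ^ n * Real.exp (-x ^ 2 / 2) := by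
  have h := integrable_rpow_mul_exp_neg_mul_sq (b := (1:ℝ)/2) (by norm_num) (s := n)
    (by exact lt_of_lt_of_le neg_one_lt_zero (Nat.cast_nonneg n))
  have h2 : (fun x : ℝ => x ^ (n : ℝ) * Real.exp (-(1/2 : ℝ) * x ^ 2))
      = fun x : ℝ => x ^ n * Real.exp (-x ^ 2 / 2) := by
    funext x
    rw [Real.rpow_natCast]
    ring_nf
  rwa [h2] at h

lemma integrable_poly_gauss0 (p : ℝ[X]) :
    Integrable fun x : ℝ => aeval x p * Real.exp (-x ^ 2 / 2) := by
  have : (fun x : ℝ => aeval x p * Real.exp (-x ^ 2 / 2))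
      = fun x : ℝ => ∑ i ∈ Finset.range (p.natDegree + 1),
          p.coeff i * (x ^ i * Real.exp (-x ^ 2 / 2)) := by
    funext x
    rw [coe_aeval_eq_eval, Polynomial.eval_eq_sum_range, Finset.sum_mul]
    simp [mul_assoc]
  rw [this]
  exact integrable_finset_sum _ fun i _ => (integrable_pow_gauss i).const_mul _

lemma integrable_poly_Gden (μ : ℝ) (p : ℝ[X]) :
    Integrable fun x : ℝ => aeval x p * Gden μ x := by
  have h := (integrable_poly_gauss0 (p.comp (X + C μ))).comp_sub_right μ
  have : (fun x : ℝ => aeval (x - μ) (p.comp (X + C μ)) * Real.exp (-(x - μ) ^ 2 / 2))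
      = fun x : ℝ => aeval x p * Gden μ x := by
    funext x
    rw [aeval_comp]
    simp [Gden]
  rwa [this] at h

lemma stein_Gden (μ : ℝ) (p : ℝ[X]) :
    ∫ x : ℝ, aeval x (derivative p) * Gden μ x
      = ∫ x : ℝ, (x - μ) * aeval x p * Gden μ x := by
  have hu : ∀ x : ℝ, HasDerivAt (fun y : ℝ => aeval y p) (aeval x (derivative p)) x := by
    intro x
    simpa [coe_aeval_eq_eval] using p.hasDerivAt x
  have key := integral_mul_deriv_eq_deriv_mul_of_integrable
    (u := fun x : ℝ => aeval x p) (u' := fun x : ℝ => aeval x (derivative p))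
    (v := Gden μ) (v' := fun x : ℝ => -(x - μ) * Gden μ x)
    (fun x _ => hu x) (fun x _ => hasDerivAt_Gden μ x)
    (by
      have := (integrable_poly_Gden μ ((X - C μ) * p)).neg
      apply this.congr
      filter_upwards with x
      simp only [Pi.neg_apply, Pi.mul_apply, map_mul, map_sub, aeval_X, aeval_C,
        Algebra.algebraMap_self, RingHom.id_apply]
      ring)
    (by
      have := integrable_poly_Gden μ (derivative p)
      apply this.congr
      filter_upwards with x
      simp [Pi.mul_apply])
    (by
      have := integrable_poly_Gden μ p
      apply this.congr
      filter_upwards with x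
      simp [Pi.mul_apply])
  -- key : ∫ u * v' = - ∫ u' * v
  have h1 : ∫ x : ℝ, aeval x p * (-(x - μ) * Gden μ x)
      = - ∫ x : ℝ, (x - μ) * aeval x p * Gden μ x := by
    rw [← integral_neg]
    congr 1; funext x; ring
  rw [h1] at key
  linarith [neg_injective (key)]

lemma hermite_Gden_integral (μ : ℝ) (k : ℕ) :
    ∫ x : ℝ, aeval x ((hermite k).map (algebraMap ℤ ℝ)) * Gden μ x
      = μ ^ k * ∫ x : ℝ, Gden μ x := by
  induction k with
  | zero => simp [hermite_zero]
  | succ k ih =>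
    set p : ℝ[X] := (hermite k).map (algebraMap ℤ ℝ) with hp
    have hmap : (hermite (k + 1)).map (algebraMap ℤ ℝ) = X * p - derivative p := by
      rw [hermite_succ, hp]
      simp [Polynomial.derivative_map]
    have intP : ∀ q : ℝ[X], Integrable fun x : ℝ => aeval x q * Gden μ x :=
      integrable_poly_Gden μ
    have int1 : Integrable fun x : ℝ => (x - μ) * aeval x p * Gden μ x := by
      apply (intP ((X - C μ) * p)).congr
      filter_upwards with x
      simp only [map_mul, map_sub, aeval_X, aeval_C, Algebra.algebraMap_self, RingHom.id_apply]
    have int2 : Integrable fun x : ℝ => μ * (aeval x p * Gden μ x) :=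
      (intP p).const_mul μ
    have int3 : Integrable fun x : ℝ => aeval x (derivative p) * Gden μ x :=
      intP _
    have h1 : (fun x : ℝ => aeval x ((hermite (k + 1)).map (algebraMap ℤ ℝ)) * Gden μ x)
        = fun x : ℝ => ((x - μ) * aeval x p * Gden μ x
            + μ * (aeval x p * Gden μ x))
          - aeval x (derivative p) * Gden μ x := by
      funext x
      rw [hmap]
      simp only [map_sub, map_mul, aeval_X]
      ring
    have int12 : Integrable (fun x : ℝ => (x - μ) * aeval x p * Gden μ x
        + μ * (aeval x p * Gden μ x)) := int1.add int2
    rw [h1, integral_sub int12 int3, integral_add int1 int2, ← stein_Gden,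
      integral_const_mul, ih]
    ring

lemma integral_gaussianReal_poly (μ : ℝ) (p : ℝ[X]) :
    ∫ x, aeval x p ∂(gaussianReal μ 1)
      = ∫ x : ℝ, aeval x p * gaussianPDFReal μ 1 x := by
  rw [gaussianReal_of_var_ne_zero μ one_ne_zero]
  have hd : gaussianPDF μ 1 = fun x => ((gaussianPDFReal μ 1 x).toNNReal : ENNReal) := rfl
  rw [hd, integral_withDensity_eq_integral_smul ((measurable_gaussianPDFReal μ 1).real_toNNReal)]
  congr 1
  funext x
  rw [NNReal.smul_def, smul_eq_mul, Real.coe_toNNReal _ (gaussianPDFReal_nonneg μ 1 x), mul_comm]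

/-- If `X ~ N(μ, 1)` and `H_k` is the probabilists' Hermite polynomial of degree `k`,
then `E[H_k(X)] = μ ^ k`. -/
theorem expectation_hermite_gaussian (μ : ℝ) (k : ℕ) :
    ∫ x, (aeval x (hermite k) : ℝ) ∂(gaussianReal μ 1) = μ ^ k := by
  have hcast : ∀ x : ℝ, (aeval x (hermite k) : ℝ)
      = aeval x ((hermite k).map (algebraMap ℤ ℝ)) := by
    intro x
    rw [aeval_map_algebraMap]
  have hpdf : ∀ x : ℝ, gaussianPDFReal μ 1 x = (√(2 * Real.pi))⁻¹ * Gden μ x := by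
    intro x
    rw [gaussianPDFReal_one]
  rw [show (fun x : ℝ => (aeval x (hermite k) : ℝ))
      = fun x : ℝ => aeval x ((hermite k).map (algebraMap ℤ ℝ)) from funext hcast,
    integral_gaussianReal_poly]
  have h1 : (fun x : ℝ => aeval x ((hermite k).map (algebraMap ℤ ℝ)) * gaussianPDFReal μ 1 x)
      = fun x : ℝ => (√(2 * Real.pi))⁻¹
          * (aeval x ((hermite k).map (algebraMap ℤ ℝ)) * Gden μ x) := by
    funext x
    rw [hpdf x]
    ring
  have hone : (√(2 * Real.pi))⁻¹ * ∫ x : ℝ, Gden μ x = 1 := by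
    have h2 := integral_gaussianPDFReal_eq_one μ (one_ne_zero)
    rw [show (fun x => gaussianPDFReal μ 1 x) = fun x : ℝ => (√(2 * Real.pi))⁻¹ * Gden μ x
      from funext hpdf, integral_const_mul] at h2
    exact h2
  rw [h1, integral_const_mul, hermite_Gden_integral]
  calc (√(2 * Real.pi))⁻¹ * (μ ^ k * ∫ x : ℝ, Gden μ x)
      = μ ^ k * ((√(2 * Real.pi))⁻¹ * ∫ x : ℝ, Gden μ x) := by ring
    _ = μ ^ k := by rw [hone, mul_one]
end

section
/- Let A be an event independent of random variables X and Y, let k ≥ 2 be an integer, and let Z = X·1(A) + Y·1(Aᶜ). Then E|Z - E Z|^k ≤ 2^{k-1}( E|X - E X|^k · P(A) + E|Y - E Y|^k · P(Aᶜ) + |E X - E Y|^k · P(A) · P(Aᶜ) ). -/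
open MeasureTheory ProbabilityTheory

/-- If `A` is an event independent of `(X, Y)`, `k ≥ 2` and `Z = X·1_A + Y·1_{Aᶜ}`, then
`E|Z - E Z|^k ≤ 2^(k-1) (E|X - E X|^k P(A) + E|Y - E Y|^k P(Aᶜ) + |E X - E Y|^k P(A) P(Aᶜ))`. -/
theorem central_moment_indicator_mix {Ω : Type*} [MeasurableSpace Ω] (μ : Measure Ω)
    [IsProbabilityMeasure μ] (X Y : Ω → ℝ) (A : Set Ω) (hA : MeasurableSet A)
    (k : ℕ) (hk : 2 ≤ k)
    (hX : MemLp X k μ) (hY : MemLp Y k μ)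
    (hindep : IndepFun (A.indicator (fun _ => (1 : ℝ))) (fun ω => (X ω, Y ω)) μ)
    (Z : Ω → ℝ) (hZ : Z = fun ω => A.indicator X ω + Aᶜ.indicator Y ω) :
    ∫ ω, |Z ω - ∫ ω', Z ω' ∂μ| ^ k ∂μ
      ≤ 2 ^ (k - 1) *
        ((∫ ω, |X ω - ∫ ω', X ω' ∂μ| ^ k ∂μ) * (μ A).toReal
          + (∫ ω, |Y ω - ∫ ω', Y ω' ∂μ| ^ k ∂μ) * (μ Aᶜ).toReal
          + |∫ ω, X ω ∂μ - ∫ ω, Y ω ∂μ| ^ k * (μ A).toReal * (μ Aᶜ).toReal) := by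
  set mX := ∫ ω', X ω' ∂μ with hmX
  set mY := ∫ ω', Y ω' ∂μ with hmY
  set p := (μ A).toReal with hp
  set q := (μ Aᶜ).toReal with hq
  have hp0 : 0 ≤ p := ENNReal.toReal_nonneg
  have hq0 : 0 ≤ q := ENNReal.toReal_nonneg
  have hpq : p + q = 1 := by
    have h1 : μ A + μ Aᶜ = 1 := by rw [measure_add_measure_compl hA, measure_univ]
    have := congrArg ENNReal.toReal h1
    rwa [ENNReal.toReal_add (measure_ne_top μ A) (measure_ne_top μ Aᶜ),
      ENNReal.toReal_one] at this
  have hp1 : p ≤ 1 := by linarith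
  have hq1 : q ≤ 1 := by linarith
  have hXm : AEStronglyMeasurable X μ := hX.1
  have hYm : AEStronglyMeasurable Y μ := hY.1
  have hk1 : (1 : ENNReal) ≤ (k : ENNReal) := by
    exact_mod_cast Nat.one_le_cast.2 (by omega)
  have hXi : Integrable X μ := hX.integrable hk1
  have hYi : Integrable Y μ := hY.integrable hk1
  -- integrability of centered powers
  have int_pow : ∀ (f : Ω → ℝ), MemLp f k μ → ∀ c : ℝ,
      Integrable (fun ω => |f ω - c| ^ k) μ := by
    intro f hf c
    have h1 : MemLp (fun ω => f ω - c) k μ := hf.sub (memLp_const c)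
    have h2 := h1.integrable_norm_rpow (by
        simp only [ne_eq, Nat.cast_eq_zero]; omega) (by simp)
    have : (fun ω => ‖f ω - c‖ ^ ((k : ENNReal).toReal)) = fun ω => |f ω - c| ^ k := by
      funext ω
      rw [show ((k : ENNReal)).toReal = (k : ℝ) by simp, Real.rpow_natCast, Real.norm_eq_abs]
    rwa [this] at h2
  -- key independence identity on A
  have key : ∀ ψ : ℝ × ℝ → ℝ, Measurable ψ →
      ∫ ω in A, ψ (X ω, Y ω) ∂μ = p * ∫ ω, ψ (X ω, Y ω) ∂μ := by
    intro ψ hψ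
    have h1 : IndepFun (A.indicator (fun _ => (1 : ℝ))) (fun ω => ψ (X ω, Y ω)) μ :=
      hindep.comp measurable_id hψ
    have hfm : AEStronglyMeasurable (fun ω => ψ (X ω, Y ω)) μ :=
      (hψ.comp_aemeasurable (hXm.aemeasurable.prodMk hYm.aemeasurable)).aestronglyMeasurable
    have h2 := h1.integral_fun_mul_eq_mul_integral (aestronglyMeasurable_one.indicator hA) hfm
    have h3 : (fun ω => A.indicator (fun _ => (1:ℝ)) ω * ψ (X ω, Y ω))
        = A.indicator (fun ω => ψ (X ω, Y ω)) := by
      funext ω; by_cases h : ω ∈ A <;> simp [h]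
    rw [h3] at h2
    rw [← integral_indicator hA, h2, integral_indicator_const (1:ℝ) hA, smul_eq_mul, mul_one]
    rfl
  have keyC : ∀ ψ : ℝ × ℝ → ℝ, Measurable ψ → Integrable (fun ω => ψ (X ω, Y ω)) μ →
      ∫ ω in Aᶜ, ψ (X ω, Y ω) ∂μ = q * ∫ ω, ψ (X ω, Y ω) ∂μ := by
    intro ψ hψ hint
    have hsplit := integral_add_compl hA hint
    have := key ψ hψ
    have hq' : q = 1 - p := by linarith
    rw [hq']
    linarith
  -- mean of Z
  have hEZ : ∫ ω', Z ω' ∂μ = p * mX + q * mY := by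
    rw [hZ]
    rw [integral_add (hXi.indicator hA) (hYi.indicator hA.compl),
      integral_indicator hA, integral_indicator hA.compl]
    have h1 : ∫ ω in A, X ω ∂μ = p * mX := key (fun v => v.1) measurable_fst
    have h2 : ∫ ω in Aᶜ, Y ω ∂μ = q * mY := keyC (fun v => v.2) measurable_snd hYi
    rw [h1, h2]
  set D := |mX - mY| ^ k with hD
  have hD0 : 0 ≤ D := pow_nonneg (abs_nonneg _) k
  set g : Ω → ℝ := fun ω => A.indicator (fun ω => |X ω - mX| ^ k + q ^ k * D) ω
      + Aᶜ.indicator (fun ω => |Y ω - mY| ^ k + p ^ k * D) ω with hg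
  have hgi : Integrable g μ :=
    (((int_pow X hX mX).add (integrable_const _)).indicator hA).add
      (((int_pow Y hY mY).add (integrable_const _)).indicator hA.compl)
  have hptwise : ∀ ω, |Z ω - ∫ ω', Z ω' ∂μ| ^ k ≤ 2 ^ (k - 1) * g ω := by
    intro ω
    have hZω : Z ω = A.indicator X ω + Aᶜ.indicator Y ω := by rw [hZ]
    rw [hEZ, hZω]
    by_cases hω : ω ∈ A
    · have hω' : ω ∉ Aᶜ := by simp [hω]
      simp only [hg, Set.indicator_of_mem hω, Set.indicator_of_notMem hω', add_zero]
      have e : X ω - (p * mX + q * mY) = (X ω - mX) + q * (mX - mY) := by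
        have hp' : p = 1 - q := by linarith
        rw [hp']; ring
      rw [e]
      calc |(X ω - mX) + q * (mX - mY)| ^ k
          ≤ (|X ω - mX| + |q * (mX - mY)|) ^ k :=
            pow_le_pow_left₀ (abs_nonneg _) (abs_add_le _ _) k
        _ ≤ 2 ^ (k - 1) * (|X ω - mX| ^ k + |q * (mX - mY)| ^ k) :=
            add_pow_le (abs_nonneg _) (abs_nonneg _) k
        _ = 2 ^ (k - 1) * (|X ω - mX| ^ k + q ^ k * D) := by
            rw [abs_mul, mul_pow, abs_of_nonneg hq0, hD]
    · have hω' : ω ∈ Aᶜ := hω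
      simp only [hg, Set.indicator_of_mem hω', Set.indicator_of_notMem hω, zero_add]
      have e : Y ω - (p * mX + q * mY) = (Y ω - mY) + p * (mY - mX) := by
        have hq' : q = 1 - p := by linarith
        rw [hq']; ring
      rw [e]
      calc |(Y ω - mY) + p * (mY - mX)| ^ k
          ≤ (|Y ω - mY| + |p * (mY - mX)|) ^ k :=
            pow_le_pow_left₀ (abs_nonneg _) (abs_add_le _ _) k
        _ ≤ 2 ^ (k - 1) * (|Y ω - mY| ^ k + |p * (mY - mX)| ^ k) :=
            add_pow_le (abs_nonneg _) (abs_nonneg _) k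
        _ = 2 ^ (k - 1) * (|Y ω - mY| ^ k + p ^ k * D) := by
            rw [abs_mul, mul_pow, abs_of_nonneg hp0, hD, abs_sub_comm mY mX]
  set CkX := ∫ ω, |X ω - mX| ^ k ∂μ with hCkX
  set CkY := ∫ ω, |Y ω - mY| ^ k ∂μ with hCkY
  have hCkX0 : 0 ≤ CkX := integral_nonneg fun ω => pow_nonneg (abs_nonneg _) k
  have hCkY0 : 0 ≤ CkY := integral_nonneg fun ω => pow_nonneg (abs_nonneg _) k
  have hI1 : Integrable (fun ω => |X ω - mX| ^ k + q ^ k * D) μ := by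
    exact (int_pow X hX mX).add (integrable_const _)
  have hI2 : Integrable (fun ω => |Y ω - mY| ^ k + p ^ k * D) μ := by
    exact (int_pow Y hY mY).add (integrable_const _)
  have hg_int : ∫ ω, g ω ∂μ = p * (CkX + q ^ k * D) + q * (CkY + p ^ k * D) := by
    have e0 : ∫ ω, g ω ∂μ = (∫ ω, A.indicator (fun ω => |X ω - mX| ^ k + q ^ k * D) ω ∂μ)
        + ∫ ω, Aᶜ.indicator (fun ω => |Y ω - mY| ^ k + p ^ k * D) ω ∂μ :=
      integral_add (hI1.indicator hA) (hI2.indicator hA.compl)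
    rw [e0, integral_indicator hA, integral_indicator hA.compl]
    have h1 : ∫ ω in A, (|X ω - mX| ^ k + q ^ k * D) ∂μ
        = p * (CkX + q ^ k * D) := by
      have := key (fun v => |v.1 - mX| ^ k + q ^ k * D)
        (((measurable_fst.sub measurable_const).abs.pow_const k).add measurable_const)
      rw [this, integral_add (int_pow X hX mX) (integrable_const _), integral_const]
      simp [hCkX]
    have h2 : ∫ ω in Aᶜ, (|Y ω - mY| ^ k + p ^ k * D) ∂μ
        = q * (CkY + p ^ k * D) := by
      have := keyC (fun v => |v.2 - mY| ^ k + p ^ k * D)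
        (((measurable_snd.sub measurable_const).abs.pow_const k).add measurable_const)
        ((int_pow Y hY mY).add (integrable_const _))
      rw [this, integral_add (int_pow Y hY mY) (integrable_const _), integral_const]
      simp [hCkY]
    rw [h1, h2]
  calc ∫ ω, |Z ω - ∫ ω', Z ω' ∂μ| ^ k ∂μ
      ≤ ∫ ω, 2 ^ (k - 1) * g ω ∂μ :=
        integral_mono_of_nonneg (ae_of_all _ fun ω => pow_nonneg (abs_nonneg _) k)
          (hgi.const_mul _) (ae_of_all _ hptwise)
    _ = 2 ^ (k - 1) * ∫ ω, g ω ∂μ := integral_const_mul _ _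
    _ = 2 ^ (k - 1) * (p * (CkX + q ^ k * D) + q * (CkY + p ^ k * D)) := by rw [hg_int]
    _ ≤ 2 ^ (k - 1) * (CkX * p + CkY * q + D * p * q) := by
        have hqk : q ^ k ≤ q ^ 2 := pow_le_pow_of_le_one hq0 hq1 hk
        have hpk : p ^ k ≤ p ^ 2 := pow_le_pow_of_le_one hp0 hp1 hk
        have h2 : (0:ℝ) ≤ 2 ^ (k - 1) := by positivity
        apply mul_le_mul_of_nonneg_left _ h2
        nlinarith [mul_nonneg hp0 hD0, mul_nonneg hq0 hD0, mul_nonneg (mul_nonneg hp0 hq0) hD0]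
end

section
/- Let X ~ N(μ, λ²) with μ ≥ (c₁/2)·λ·√(ln n) for constants c₁ >ated 0, λ > 0, n ≥ 2. Then |E|X| - μ| ≤ (2λ²/μ)·exp(-μ²/(2λ²)), and consequently |E|X| - μ| ≤ (4λ/(c₁√(ln n)))·n^{-c₁²/8}. -/
open MeasureTheory ProbabilityTheory Real Set Filter
open scoped NNReal ENNReal

lemma integrableOn_exp_mul_Iic' {b : ℝ} (hb : 0 < b) :
    IntegrableOn (fun x => Real.exp (b * x)) (Set.Iic (0:ℝ)) := by
  have h1 : Integrable ((Set.Iic (0:ℝ)).indicator Real.exp) :=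
    (integrableOn_exp_Iic 0).integrable_indicator measurableSet_Iic
  have h2 := h1.comp_mul_left' hb.ne'
  have h3 : (fun x => (Set.Iic (0:ℝ)).indicator Real.exp (b * x))
      = (Set.Iic (0:ℝ)).indicator (fun x => Real.exp (b * x)) := by
    ext x
    by_cases hx : x ≤ 0
    · have : b * x ≤ 0 := mul_nonpos_iff.2 (Or.inl ⟨hb.le, hx⟩)
      simp [Set.indicator_of_mem, hx, this]
    · push_neg at hx
      have : ¬ (b * x ≤ 0) := by nlinarith
      simp [Set.indicator_of_notMem, hx.not_ge, this]
  rw [h3] at h2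
  exact (integrable_indicator_iff measurableSet_Iic).mp h2

lemma integral_exp_mul_Iic' {b : ℝ} (hb : 0 < b) :
    ∫ x in Set.Iic (0:ℝ), Real.exp (b * x) = 1 / b := by
  have hderiv : ∀ x ∈ Set.Iic (0:ℝ), HasDerivAt (fun x => Real.exp (b * x) / b)
      (Real.exp (b * x)) x := by
    intro x _
    have h : HasDerivAt (fun x : ℝ => b * x) b x := by
      simpa using (hasDerivAt_id x).const_mul b
    have := (h.exp).div_const b
    simpa [mul_div_assoc, div_self hb.ne'] using this
  have htend : Tendsto (fun x => Real.exp (b * x) / b) atBot (nhds 0) := by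
    have h1 : Tendsto (fun x : ℝ => b * x) atBot atBot := by
      exact Tendsto.const_mul_atBot hb tendsto_id
    have := (Real.tendsto_exp_atBot.comp h1).div_const b
    simpa using this
  have := integral_Iic_of_hasDerivAt_of_tendsto' hderiv (integrableOn_exp_mul_Iic' hb) htend
  simpa using this

lemma mul_exp_neg_sq_le {v t : ℝ} (hv : 0 < v) (ht : 0 ≤ t) :
    t * Real.exp (-t^2/(2*v)) ≤ Real.sqrt (2*Real.pi*v) := by
  set s := Real.sqrt (2*Real.pi*v) with hs
  have hs2 : s^2 = 2*Real.pi*v := Real.sq_sqrt (by positivity)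
  have hspos : 0 < s := Real.sqrt_pos.2 (by positivity)
  by_cases h : t ≤ s
  · have h0 : (0:ℝ) ≤ t^2/(2*v) := by positivity
    have hneg : -t^2/(2*v) = -(t^2/(2*v)) := by ring
    have : Real.exp (-t^2/(2*v)) ≤ 1 := Real.exp_le_one_iff.2 (by rw [hneg]; linarith)
    nlinarith [Real.exp_pos (-t^2/(2*v))]
  · push_neg at h
    have hE : t^2/(2*v) ≤ Real.exp (t^2/(2*v)) := by
      have := Real.add_one_le_exp (t^2/(2*v))
      nlinarith [sq_nonneg t, hv]
    have hrw : Real.exp (-t^2/(2*v)) = (Real.exp (t^2/(2*v)))⁻¹ := by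
      rw [← Real.exp_neg]; ring_nf
    rw [hrw]
    have hEpos : 0 < Real.exp (t^2/(2*v)) := Real.exp_pos _
    have hpi : (3:ℝ) < Real.pi := Real.pi_gt_three
    rw [mul_inv_le_iff₀ hEpos]
    have ht' : 0 < t := hspos.trans h
    have hE' : t^2 ≤ Real.exp (t^2/(2*v)) * (2*v) := (div_le_iff₀ (by positivity)).1 hE
    nlinarith [mul_lt_mul_of_pos_right h (mul_pos hspos hEpos), hE',
      mul_pos hv hEpos, hpi, ht', mul_pos hspos hEpos]

set_option maxHeartbeats 1000000 in
/-- For `X ~ N(μ, λ²)` with `μ ≥ (c₁/2) λ √(ln n)`, `c₁ > 0`, `λ > 0`, `n ≥ 2`,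
`|E|X| - μ| ≤ (2λ²/μ)·exp(-μ²/(2λ²))` and consequently
`|E|X| - μ| ≤ (4λ/(c₁ √(ln n)))·n^(-c₁²/8)`. -/
theorem abs_expectation_abs_gaussian_sub_mean_le (μ lam c₁ : ℝ) (n : ℕ)
    (hn : 2 ≤ n) (hc : 0 < c₁) (hlam : 0 < lam)
    (hμ : (c₁ / 2) * lam * Real.sqrt (Real.log n) ≤ μ) :
    |(∫ x, |x| ∂(gaussianReal μ ⟨lam ^ 2, sq_nonneg lam⟩)) - μ|
        ≤ (2 * lam ^ 2 / μ) * Real.exp (-μ ^ 2 / (2 * lam ^ 2))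
    ∧ |(∫ x, |x| ∂(gaussianReal μ ⟨lam ^ 2, sq_nonneg lam⟩)) - μ|
        ≤ (4 * lam / (c₁ * Real.sqrt (Real.log n))) * (n : ℝ) ^ (-c₁ ^ 2 / 8) := by
  set V : ℝ≥0 := ⟨lam ^ 2, sq_nonneg lam⟩ with hVdef
  have hVc : (V : ℝ) = lam ^ 2 := rfl
  have hv : (0:ℝ) < lam ^ 2 := by positivity
  have hVne : V ≠ 0 := by
    intro h0
    have h1 : (V : ℝ) = 0 := by rw [h0]; simp
    rw [hVc] at h1; nlinarith
  have hn1 : (1:ℝ) < (n:ℝ) := by exact_mod_cast Nat.lt_of_lt_of_le one_lt_two hn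
  have hlog : 0 < Real.log n := Real.log_pos hn1
  have hsl : 0 < Real.sqrt (Real.log n) := Real.sqrt_pos.2 hlog
  have hμ0 : 0 < μ := lt_of_lt_of_le (by positivity) hμ
  obtain ⟨p, hp⟩ : ∃ p : ℝ → ℝ, p = gaussianPDFReal μ V := ⟨_, rfl⟩
  have hpnonneg : ∀ x, 0 ≤ p x := by
    intro x; rw [hp]; exact gaussianPDFReal_nonneg μ V x
  -- conversion to Lebesgue integral with density
  have hconv : ∀ g : ℝ → ℝ, ∫ x, g x ∂(gaussianReal μ V) = ∫ x, p x * g x := by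
    intro g
    rw [gaussianReal_of_var_ne_zero μ hVne]
    have hmeas : Measurable fun x => (p x).toNNReal := by
      rw [hp]; exact (measurable_gaussianPDFReal μ V).real_toNNReal
    have : volume.withDensity (gaussianPDF μ V)
        = volume.withDensity (fun x => ((p x).toNNReal : ℝ≥0∞)) := by rw [hp]; rfl
    rw [this, integral_withDensity_eq_integral_smul hmeas g]
    refine integral_congr_ae (Eventually.of_forall fun x => ?_)
    simp only [NNReal.smul_def, Real.coe_toNNReal _ (hpnonneg x), smul_eq_mul]
  -- the translated pdf
  obtain ⟨c, hcdef⟩ : ∃ c : ℝ, c = (Real.sqrt (2 * Real.pi * lam ^ 2))⁻¹ := ⟨_, rfl⟩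
  have hps : ∀ x : ℝ, p (x + μ) = c * Real.exp (-x^2/(2*lam^2)) := by
    intro x
    simp only [hp, gaussianPDFReal, hVc, add_sub_cancel_right, hcdef]

  have hb2 : (0:ℝ) < (2*lam^2)⁻¹ := by positivity
  have hexp_eq : ∀ x : ℝ, -x^2/(2*lam^2) = -((2*lam^2)⁻¹) * x^2 := by
    intro x; field_simp
  have hint1 : Integrable (fun x : ℝ => c * (x * Real.exp (-((2*lam^2)⁻¹) * x^2))) :=
    (integrable_mul_exp_neg_mul_sq hb2).const_mul c
  have hint2 : Integrable (fun x : ℝ => (c*μ) * Real.exp (-((2*lam^2)⁻¹) * x^2)) :=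
    (integrable_exp_neg_mul_sq hb2).const_mul _
  have hsum : (fun x : ℝ => p (x + μ) * (x + μ))
      = fun x => c * (x * Real.exp (-((2*lam^2)⁻¹) * x^2))
        + (c*μ) * Real.exp (-((2*lam^2)⁻¹) * x^2) := by
    funext x
    rw [hps x, ← hexp_eq x]
    ring
  -- mean
  have hmean : ∫ x, p x * x = μ := by
    rw [← integral_add_right_eq_self (fun x => p x * x) μ, hsum,
      integral_add hint1 hint2]
    have hodd : ∫ x : ℝ, c * (x * Real.exp (-((2*lam^2)⁻¹) * x^2)) = 0 := by
      have h := integral_neg_eq_self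
        (fun x : ℝ => c * (x * Real.exp (-((2*lam^2)⁻¹) * x^2))) volume
      have h2 : (fun x : ℝ => c * ((-x) * Real.exp (-((2*lam^2)⁻¹) * (-x)^2)))
          = fun x : ℝ => -(c * (x * Real.exp (-((2*lam^2)⁻¹) * x^2))) := by
        funext x; rw [neg_sq]; ring
      rw [h2, integral_neg] at h
      linarith
    have hpdf0 : ∀ x : ℝ, gaussianPDFReal 0 V x = c * Real.exp (-((2*lam^2)⁻¹) * x^2) := by
      intro x
      simp only [gaussianPDFReal, hVc, sub_zero, hcdef, ← hexp_eq x]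
    have hsec : ∫ x : ℝ, (c*μ) * Real.exp (-((2*lam^2)⁻¹) * x^2) = μ := by
      have h1 : (fun x : ℝ => (c*μ) * Real.exp (-((2*lam^2)⁻¹) * x^2))
          = fun x : ℝ => μ * gaussianPDFReal 0 V x := by
        funext x; rw [hpdf0 x]; ring
      rw [h1, integral_const_mul, integral_gaussianPDFReal_eq_one 0 hVne, mul_one]
    rw [hodd, hsec, zero_add]
  -- integrability over volume
  have hint_id : Integrable (fun x => p x * x) := by
    have h1 : Integrable (fun x : ℝ => p (x + μ) * (x + μ)) := by
      rw [hsum]; exact hint1.add hint2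
    have h2 := h1.comp_sub_right μ
    refine h2.congr (Eventually.of_forall fun x => ?_)
    simp [sub_add_cancel]
  have hint_abs : Integrable (fun x => p x * |x|) := by
    refine hint_id.abs.congr (Eventually.of_forall fun x => ?_)
    simp only [abs_mul, abs_of_nonneg (hpnonneg x)]
  -- difference
  have hI : (∫ x, |x| ∂(gaussianReal μ V)) = ∫ x, p x * |x| := hconv _
  have hint_diff : Integrable (fun x => p x * (|x| - x)) := by
    have := hint_abs.sub hint_id
    refine this.congr (Eventually.of_forall fun x => ?_)
    simp [mul_sub]
  have hdiff : (∫ x, |x| ∂(gaussianReal μ V)) - μ = ∫ x, p x * (|x| - x) := by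
    rw [hI, ← hmean, ← integral_sub hint_abs hint_id]
    refine integral_congr_ae (Eventually.of_forall fun x => ?_)
    simp [mul_sub]
  have hpos : 0 ≤ (∫ x, |x| ∂(gaussianReal μ V)) - μ := by
    rw [hdiff]
    exact integral_nonneg fun x => mul_nonneg (hpnonneg x) (sub_nonneg.2 (le_abs_self x))
  -- the bounding function
  obtain ⟨b, hbdef⟩ : ∃ b : ℝ, b = μ / lam ^ 2 := ⟨_, rfl⟩
  have hb : 0 < b := by rw [hbdef]; positivity
  obtain ⟨C, hCdef⟩ : ∃ C : ℝ, C = Real.exp (-μ^2/(2*lam^2)) := ⟨_, rfl⟩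
  have hC : 0 < C := hCdef ▸ Real.exp_pos _
  obtain ⟨h, hhdef⟩ : ∃ h : ℝ → ℝ,
      h = (Set.Iic (0:ℝ)).indicator (fun x => 2*C*Real.exp (b*x)) := ⟨_, rfl⟩
  have hint_h : Integrable h := by
    have h1 : IntegrableOn (fun x => 2*C*Real.exp (b*x)) (Set.Iic (0:ℝ)) :=
      (integrableOn_exp_mul_Iic' hb).const_mul (2*C)
    rw [hhdef]
    exact h1.integrable_indicator measurableSet_Iic
  have hs : 0 < Real.sqrt (2*Real.pi*lam^2) := Real.sqrt_pos.2 (by positivity)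
  have hptw : ∀ x, p x * (|x| - x) ≤ h x := by
    intro x
    by_cases hx : x ≤ 0
    · have hxm : x ∈ Set.Iic (0:ℝ) := hx
      rw [hhdef, Set.indicator_of_mem hxm, abs_of_nonpos hx]
      have hexp : Real.exp (-(x - μ)^2/(2*lam^2))
          = Real.exp (-x^2/(2*lam^2)) * (Real.exp (b*x) * C) := by
        rw [hCdef, ← Real.exp_add, ← Real.exp_add]
        congr 1
        rw [hbdef]
        field_simp
        ring
      have hkey : (-x) * Real.exp (-x^2/(2*lam^2)) ≤ Real.sqrt (2*Real.pi*lam^2) := by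
        have := mul_exp_neg_sq_le hv (neg_nonneg.2 hx)
        rwa [neg_sq] at this
      have hpx : p x = (Real.sqrt (2*Real.pi*lam^2))⁻¹
          * (Real.exp (-x^2/(2*lam^2)) * (Real.exp (b*x) * C)) := by
        have h0 := hps (x - μ)
        rw [sub_add_cancel] at h0
        rw [h0, hcdef, hexp]
      rw [hpx]
      have h1 : (2 * (Real.exp (b*x) * C) * (Real.sqrt (2*Real.pi*lam^2))⁻¹)
            * ((-x) * Real.exp (-x^2/(2*lam^2)))
          ≤ (2 * (Real.exp (b*x) * C) * (Real.sqrt (2*Real.pi*lam^2))⁻¹)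
            * Real.sqrt (2*Real.pi*lam^2) :=
        mul_le_mul_of_nonneg_left hkey (by positivity)
      have hss : Real.sqrt (2*Real.pi*lam^2) * (Real.sqrt (2*Real.pi*lam^2))⁻¹ = 1 :=
        mul_inv_cancel₀ hs.ne'
      calc (Real.sqrt (2*Real.pi*lam^2))⁻¹
            * (Real.exp (-x^2/(2*lam^2)) * (Real.exp (b*x) * C)) * (-x - x)
          = (2 * (Real.exp (b*x) * C) * (Real.sqrt (2*Real.pi*lam^2))⁻¹)
            * ((-x) * Real.exp (-x^2/(2*lam^2))) := by ring
        _ ≤ (2 * (Real.exp (b*x) * C) * (Real.sqrt (2*Real.pi*lam^2))⁻¹)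
            * Real.sqrt (2*Real.pi*lam^2) := h1
        _ = 2 * C * Real.exp (b*x)
            * (Real.sqrt (2*Real.pi*lam^2) * (Real.sqrt (2*Real.pi*lam^2))⁻¹) := by ring
        _ = 2 * C * Real.exp (b*x) := by rw [hss, mul_one]
    · push_neg at hx
      have hxm : x ∉ Set.Iic (0:ℝ) := fun hm => hx.not_ge hm
      rw [hhdef, Set.indicator_of_notMem hxm, abs_of_pos hx, sub_self, mul_zero]
  have hle : (∫ x, |x| ∂(gaussianReal μ V)) - μ ≤ ∫ x, h x := by
    rw [hdiff]
    exact integral_mono hint_diff hint_h hptw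
  have hval : ∫ x, h x = (2 * lam ^ 2 / μ) * C := by
    rw [hhdef, integral_indicator measurableSet_Iic, integral_const_mul,
      integral_exp_mul_Iic' hb, hbdef, hCdef]
    field_simp
  subst hCdef
  have part1 : |(∫ x, |x| ∂(gaussianReal μ V)) - μ| ≤ (2 * lam ^ 2 / μ)
      * Real.exp (-μ^2/(2*lam^2)) := by
    rw [abs_of_nonneg hpos]
    calc (∫ x, |x| ∂(gaussianReal μ V)) - μ ≤ ∫ x, h x := hle
    _ = (2 * lam ^ 2 / μ) * Real.exp (-μ^2/(2*lam^2)) := hval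
  refine ⟨part1, le_trans part1 ?_⟩
  -- part 2
  have hA : 2 * lam ^ 2 / μ ≤ 4 * lam / (c₁ * Real.sqrt (Real.log n)) := by
    rw [div_le_div_iff₀ hμ0 (by positivity)]
    nlinarith [mul_le_mul_of_nonneg_left hμ (by positivity : (0:ℝ) ≤ 4 * lam)]
  have hn0 : (0:ℝ) < (n:ℝ) := by positivity
  have hB : Real.exp (-μ^2/(2*lam^2)) ≤ (n:ℝ) ^ (-c₁^2/8 : ℝ) := by
    rw [Real.rpow_def_of_pos hn0, Real.exp_le_exp]
    have hμ2 : ((c₁ / 2) * lam * Real.sqrt (Real.log n))^2 ≤ μ^2 :=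
      pow_le_pow_left₀ (by positivity) hμ 2
    have hms : ((c₁ / 2) * lam * Real.sqrt (Real.log n))^2
        = (c₁^2/4) * lam^2 * Real.log n := by
      rw [mul_pow, mul_pow, Real.sq_sqrt hlog.le]
      ring
    rw [div_le_iff₀ (by positivity : (0:ℝ) < 2 * lam ^ 2)]
    nlinarith [hμ2, hms]
  exact mul_le_mul hA hB (Real.exp_pos _).le (by positivity)
end

section
/- Let X ~ N(μ, λ²) with μ > 0. Then E[|X|] - μ = 2·E[|X|·1(X ≤ 0)] ≤ (2λ²/μ)·exp(-μ²/(2λ²)). -/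
open MeasureTheory ProbabilityTheory Real Set Filter Topology
open scoped NNReal ENNReal


-- I2: ∫ t in Ioi 0, t * exp (-b t²) = (2b)⁻¹
lemma aux_integral_sq {b : ℝ} (hb : 0 < b) :
    ∫ t in Ioi (0:ℝ), t * Real.exp (-b * t ^ 2) = (2 * b)⁻¹ := by
  have A : ∀ x : ℝ, HasDerivAt (fun x => -(2 * b)⁻¹ * Real.exp (-b * x ^ 2))
      (x * Real.exp (-b * x ^ 2)) x := by
    intro x
    convert ((hasDerivAt_pow 2 x).const_mul (-b)).exp.const_mul (-(2 * b)⁻¹) using 1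
    case e'_9 =>
      field_simp
      ring
    all_goals rfl
  have B : Tendsto (fun y : ℝ ↦ -(2 * b)⁻¹ * Real.exp (-b * y ^ 2)) atTop (𝓝 (-(2 * b)⁻¹ * 0)) := by
    refine Tendsto.const_mul _ ?_
    refine Real.tendsto_exp_atBot.comp ?_
    exact (tendsto_pow_atTop two_ne_zero).const_mul_atTop_of_neg (neg_lt_zero.2 hb)
  have := integral_Ioi_of_hasDerivAt_of_tendsto' (a := 0) (fun x _ => A x)
    (integrable_mul_exp_neg_mul_sq hb).integrableOn (by simpa using B)
  simpa using this

-- I1: ∫ t in Ioi 0, t * exp (-(r t)) = (r²)⁻¹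
lemma aux_integral_lin {r : ℝ} (hr : 0 < r) :
    ∫ t in Ioi (0:ℝ), t * Real.exp (-(r * t)) = (r ^ 2)⁻¹ := by
  have h := integral_rpow_mul_exp_neg_mul_Ioi (a := 2) (r := r) (by norm_num) hr
  rw [Real.Gamma_two, mul_one] at h
  have h2 : ∀ t ∈ Ioi (0:ℝ), t ^ ((2:ℝ) - 1) * Real.exp (-(r * t)) = t * Real.exp (-(r * t)) := by
    intro t ht
    norm_num
  rw [setIntegral_congr_fun measurableSet_Ioi h2] at h
  rw [h]
  rw [show ((2:ℝ)) = ((2:ℕ):ℝ) by norm_num, Real.rpow_natCast]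
  field_simp

lemma aux_intOn_lin {r : ℝ} (hr : 0 < r) :
    IntegrableOn (fun t : ℝ => t * Real.exp (-(r * t))) (Ioi 0) := by
  have h := integrableOn_rpow_mul_exp_neg_mul_rpow (p := 1) (s := 1) (b := r)
    (by norm_num) one_pos hr
  refine h.congr_fun (fun t ht => ?_) measurableSet_Ioi
  simp [Real.rpow_one]


lemma aux_setIntegral_gaussian (μ : ℝ) {v : ℝ≥0} (hv : v ≠ 0) {s : Set ℝ}
    (hs : MeasurableSet s) (f : ℝ → ℝ) :
    ∫ x in s, f x ∂(gaussianReal μ v) = ∫ x in s, gaussianPDFReal μ v x * f x := by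
  rw [gaussianReal_of_var_ne_zero _ hv]
  have hd : gaussianPDF μ v = fun x => ((gaussianPDFReal μ v x).toNNReal : ℝ≥0∞) := by
    funext x; rfl
  rw [hd, setIntegral_withDensity_eq_setIntegral_smul
    ((measurable_gaussianPDFReal μ v).real_toNNReal) f hs]
  refine setIntegral_congr_fun hs (fun x _ => ?_)
  simp [NNReal.smul_def, Real.coe_toNNReal _ (gaussianPDFReal_nonneg μ v x)]

lemma aux_integral_gaussian (μ : ℝ) {v : ℝ≥0} (hv : v ≠ 0) (f : ℝ → ℝ) :
    ∫ x, f x ∂(gaussianReal μ v) = ∫ x, gaussianPDFReal μ v x * f x := by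
  have := aux_setIntegral_gaussian μ hv MeasurableSet.univ f
  simpa using this


lemma aux_integrable_abs_mul (μ : ℝ) {v : ℝ≥0} (hv : 0 < (v:ℝ)) :
    Integrable (fun x => gaussianPDFReal μ v x * |x|) := by
  have hb : 0 < (2*(v:ℝ))⁻¹ := by positivity
  have hc : (0:ℝ) ≤ (Real.sqrt (2*π*(v:ℝ)))⁻¹ := by positivity
  have key : Integrable (fun y : ℝ => gaussianPDFReal 0 v y * |y + μ|) := by
    have h1 : Integrable (fun y : ℝ => gaussianPDFReal 0 v y * (|y| + |μ|)) := by
      have ha : Integrable (fun y : ℝ => gaussianPDFReal 0 v y * |y|) := by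
        have h0 := ((integrable_mul_exp_neg_mul_sq hb).abs.const_mul
          ((Real.sqrt (2*π*(v:ℝ)))⁻¹))
        refine h0.congr (Filter.Eventually.of_forall fun y => ?_)
        simp only [gaussianPDFReal, sub_zero, abs_mul, Real.abs_exp]
        rw [show -(2*(v:ℝ))⁻¹ * y^2 = -y^2/(2*(v:ℝ)) by ring]
        ring
      have hb2 : Integrable (fun y : ℝ => gaussianPDFReal 0 v y * |μ|) :=
        (integrable_gaussianPDFReal 0 v).mul_const _
      exact (ha.add hb2).congr (Filter.Eventually.of_forall fun y => by simp [mul_add])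
    refine h1.mono' ?_ (Filter.Eventually.of_forall fun y => ?_)
    · exact ((measurable_gaussianPDFReal 0 v).mul
        ((measurable_id.add_const μ).abs)).aestronglyMeasurable
    · have h3 := gaussianPDFReal_nonneg 0 v y
      rw [Real.norm_eq_abs, abs_of_nonneg (by positivity)]
      exact mul_le_mul_of_nonneg_left (abs_add_le y μ) h3
  have h2 := key.comp_sub_right μ
  refine h2.congr (Filter.Eventually.of_forall fun x => ?_)
  simp [gaussianPDFReal, sub_add_cancel]

lemma aux_integrable_id_mul (μ : ℝ) {v : ℝ≥0} (hv : 0 < (v:ℝ)) :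
    Integrable (fun x => gaussianPDFReal μ v x * x) := by
  refine (aux_integrable_abs_mul μ hv).mono' ?_ (Filter.Eventually.of_forall fun x => ?_)
  · exact ((measurable_gaussianPDFReal μ v).mul measurable_id).aestronglyMeasurable
  · have h3 := gaussianPDFReal_nonneg μ v x
    rw [Real.norm_eq_abs, abs_mul, abs_of_nonneg h3]

lemma aux_mean (μ : ℝ) {v : ℝ≥0} (hv : v ≠ 0) :
    ∫ x, gaussianPDFReal μ v x * x = μ := by
  have hvpos : 0 < (v:ℝ) := lt_of_le_of_ne v.2 (by exact_mod_cast (Ne.symm hv))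
  have hshift := integral_add_right_eq_self (μ := (volume : Measure ℝ))
    (fun x => gaussianPDFReal μ v x * x) μ
  have hg0 : ∀ y : ℝ, gaussianPDFReal μ v (y + μ) = gaussianPDFReal 0 v y := by
    intro y; simp [gaussianPDFReal]
  rw [show (fun x => gaussianPDFReal μ v (x + μ) * (x + μ))
      = (fun y => gaussianPDFReal 0 v y * (y + μ)) by funext y; rw [hg0]] at hshift
  have hsplit : ∫ y, gaussianPDFReal 0 v y * (y + μ)
      = (∫ y, gaussianPDFReal 0 v y * y) + μ * ∫ y, gaussianPDFReal 0 v y := by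
    rw [← integral_const_mul, ← integral_add (aux_integrable_id_mul 0 hvpos)]
    · congr 1; funext y; ring
    · exact (integrable_gaussianPDFReal 0 v).const_mul μ
  have hodd : ∫ y, gaussianPDFReal 0 v y * y = 0 := by
    have heq : ∫ y, gaussianPDFReal 0 v y * y = - ∫ y, gaussianPDFReal 0 v y * y := by
      conv_lhs => rw [← integral_neg_eq_self]
      rw [← integral_neg]
      congr 1; funext y
      have : gaussianPDFReal 0 v (-y) = gaussianPDFReal 0 v y := by
        simp [gaussianPDFReal]
      rw [this]; ring
    linarith
  rw [← hshift, hsplit, hodd, integral_gaussianPDFReal_eq_one 0 hv]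
  ring



lemma aux_eq_part (μ : ℝ) {v : ℝ≥0} (hv : 0 < (v:ℝ)) :
    (∫ x, gaussianPDFReal μ v x * |x|) - (∫ x, gaussianPDFReal μ v x * x)
      = 2 * ∫ x in Iic (0:ℝ), gaussianPDFReal μ v x * |x| := by
  rw [← integral_sub (aux_integrable_abs_mul μ hv) (aux_integrable_id_mul μ hv)]
  have h : (fun x => gaussianPDFReal μ v x * |x| - gaussianPDFReal μ v x * x)
      = (Iic (0:ℝ)).indicator (fun x => 2 * (gaussianPDFReal μ v x * |x|)) := by
    funext x
    rcases le_or_gt x 0 with h | h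
    · rw [indicator_of_mem (mem_Iic.2 h), abs_of_nonpos h]; ring
    · rw [indicator_of_notMem (by simpa using h), abs_of_pos h]; ring
  rw [h, integral_indicator measurableSet_Iic, integral_const_mul]

lemma aux_bound (μ lam : ℝ) (hμ : 0 < μ) (hlam : 0 < lam) :
    2 * ∫ x in Iic (0:ℝ), gaussianPDFReal μ ⟨lam^2, sq_nonneg lam⟩ x * |x|
      ≤ 2 * lam^2/μ * Real.exp (-μ^2/(2*lam^2)) := by
  set v : ℝ≥0 := ⟨lam^2, sq_nonneg lam⟩ with hvdef
  have hvc : (v:ℝ) = lam^2 := rfl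
  have hvpos : 0 < (v:ℝ) := by rw [hvc]; positivity
  set g : ℝ → ℝ := gaussianPDFReal μ v with hgdef
  set c : ℝ := (Real.sqrt (2*π*lam^2))⁻¹ with hcdef
  set E : ℝ := Real.exp (-μ^2/(2*lam^2)) with hEdef
  have hE : 0 < E := Real.exp_pos _
  have hsq : Real.sqrt (2*π*lam^2) = Real.sqrt (2*π) * lam := by
    rw [Real.sqrt_mul (by positivity), Real.sqrt_sq hlam.le]
  have h2pi : (2:ℝ) ≤ Real.sqrt (2*π) := by
    have h4 : Real.sqrt 4 ≤ Real.sqrt (2*π) :=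
      Real.sqrt_le_sqrt (by nlinarith [Real.pi_gt_three])
    have h42 : Real.sqrt 4 = 2 := by
      rw [show (4:ℝ) = 2^2 by norm_num, Real.sqrt_sq (by norm_num : (0:ℝ) ≤ 2)]
    linarith
  have hsqrtpos : (0:ℝ) < Real.sqrt (2*π) := by linarith
  have hcval : c = (Real.sqrt (2*π) * lam)⁻¹ := by rw [hcdef, hsq]
  have hcpos : 0 < c := by rw [hcval]; positivity
  have hflip : ∫ x in Iic (0:ℝ), g x * |x| = ∫ t in Ioi (0:ℝ), g (-t) * |(-t)| := by
    have h := integral_comp_neg_Ioi 0 (fun x => g x * |x|)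
    simp only [neg_zero] at h
    exact h.symm
  have hIntL : IntegrableOn (fun t : ℝ => g (-t) * |(-t)|) (Ioi 0) :=
    ((aux_integrable_abs_mul μ hvpos).comp_neg).integrableOn
  have hgexp : ∀ t : ℝ, g (-t) = c * Real.exp (-((t+μ)^2) / (2*lam^2)) := by
    intro t
    rw [hgdef]
    show (Real.sqrt (2*π*(v:ℝ)))⁻¹ * Real.exp (-((-t) - μ)^2 / (2*(v:ℝ))) = _
    rw [hvc]
    congr 2
    ring
  rw [hflip]
  rcases le_total μ lam with hcase | hcase
  · -- μ ≤ lam : gaussian tail bound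
    have hb : 0 < (2*lam^2)⁻¹ := by positivity
    have hle : ∫ t in Ioi (0:ℝ), g (-t) * |(-t)|
        ≤ ∫ t in Ioi (0:ℝ), (c * E) * (t * Real.exp (-(2*lam^2)⁻¹ * t^2)) := by
      refine setIntegral_mono_on hIntL
        (((integrable_mul_exp_neg_mul_sq hb).const_mul (c*E)).integrableOn)
        measurableSet_Ioi (fun t ht => ?_)
      have ht : 0 < t := ht
      rw [hgexp, abs_neg, abs_of_pos ht]
      have hexp : Real.exp (-((t+μ)^2) / (2*lam^2))
          ≤ E * Real.exp (-(2*lam^2)⁻¹ * t^2) := by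
        rw [hEdef, ← Real.exp_add]
        apply Real.exp_le_exp.2
        have hrr : -μ^2/(2*lam^2) + -(2*lam^2)⁻¹*t^2 = (-μ^2 - t^2)/(2*lam^2) := by ring
        rw [hrr]
        gcongr
        nlinarith [mul_pos ht hμ]
      calc c * Real.exp (-((t+μ)^2) / (2*lam^2)) * t
          ≤ c * (E * Real.exp (-(2*lam^2)⁻¹ * t^2)) * t :=
            mul_le_mul_of_nonneg_right (mul_le_mul_of_nonneg_left hexp hcpos.le) ht.le
        _ = (c * E) * (t * Real.exp (-(2*lam^2)⁻¹ * t^2)) := by ring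
    rw [integral_const_mul, aux_integral_sq hb] at hle
    have key : c * (2 * (2*lam^2)⁻¹)⁻¹ ≤ lam^2/μ := by
      rw [hcval, show (2 * (2*lam^2)⁻¹)⁻¹ = lam^2 by field_simp]
      rw [inv_mul_le_iff₀ (by positivity), ← mul_div_assoc, le_div_iff₀ hμ]
      nlinarith [mul_le_mul_of_nonneg_left hcase (sq_nonneg lam),
        mul_le_mul_of_nonneg_right h2pi (le_of_lt (pow_pos hlam 3)), pow_pos hlam 3]
    calc 2 * ∫ t in Ioi (0:ℝ), g (-t) * |(-t)|
        ≤ 2 * (c * E * (2 * (2*lam^2)⁻¹)⁻¹) := by linarith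
      _ = 2 * E * (c * (2 * (2*lam^2)⁻¹)⁻¹) := by ring
      _ ≤ 2 * E * (lam^2/μ) := by
          exact mul_le_mul_of_nonneg_left key (by positivity)
      _ = 2 * lam^2/μ * E := by ring
  · -- lam ≤ μ : exponential tail bound
    have hr : 0 < μ/lam^2 := by positivity
    have hle : ∫ t in Ioi (0:ℝ), g (-t) * |(-t)|
        ≤ ∫ t in Ioi (0:ℝ), (c * E) * (t * Real.exp (-(μ/lam^2 * t))) := by
      refine setIntegral_mono_on hIntL
        (((aux_intOn_lin hr).const_mul (c*E))) measurableSet_Ioi (fun t ht => ?_)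
      have ht : 0 < t := ht
      rw [hgexp, abs_neg, abs_of_pos ht]
      have hexp : Real.exp (-((t+μ)^2) / (2*lam^2))
          ≤ E * Real.exp (-(μ/lam^2 * t)) := by
        rw [hEdef, ← Real.exp_add]
        apply Real.exp_le_exp.2
        have hrr : -μ^2/(2*lam^2) + -(μ/lam^2 * t) = (-μ^2 - 2*μ*t)/(2*lam^2) := by ring
        rw [hrr]
        gcongr
        nlinarith [sq_nonneg t]
      calc c * Real.exp (-((t+μ)^2) / (2*lam^2)) * t
          ≤ c * (E * Real.exp (-(μ/lam^2 * t))) * t :=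
            mul_le_mul_of_nonneg_right (mul_le_mul_of_nonneg_left hexp hcpos.le) ht.le
        _ = (c * E) * (t * Real.exp (-(μ/lam^2 * t))) := by ring
    rw [integral_const_mul, aux_integral_lin hr] at hle
    have key : c * ((μ/lam^2)^2)⁻¹ ≤ lam^2/μ := by
      rw [hcval, show ((μ/lam^2)^2)⁻¹ = lam^4/μ^2 by field_simp]
      rw [inv_mul_le_iff₀ (by positivity), ← mul_div_assoc, div_le_div_iff₀ (by positivity) hμ]
      nlinarith [mul_le_mul_of_nonneg_right hcase (le_of_lt (mul_pos (pow_pos hlam 3) hμ)),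
        mul_le_mul_of_nonneg_right h2pi (le_of_lt (mul_pos (pow_pos hlam 3) (pow_pos hμ 2))),
        mul_pos (pow_pos hlam 3) (pow_pos hμ 2)]
    calc 2 * ∫ t in Ioi (0:ℝ), g (-t) * |(-t)|
        ≤ 2 * (c * E * ((μ/lam^2)^2)⁻¹) := by linarith
      _ = 2 * E * (c * ((μ/lam^2)^2)⁻¹) := by ring
      _ ≤ 2 * E * (lam^2/μ) := mul_le_mul_of_nonneg_left key (by positivity)
      _ = 2 * lam^2/μ * E := by ring

/-- For `X ~ N(μ, λ²)` with `μ > 0`,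
`E|X| - μ = 2·E[|X|·1(X ≤ 0)] ≤ (2λ²/μ)·exp(-μ²/(2λ²))`. -/
theorem expectation_abs_gaussian_sub_mean (μ lam : ℝ) (hμ : 0 < μ) (hlam : 0 < lam) :
    (∫ x, |x| ∂(gaussianReal μ ⟨lam ^ 2, sq_nonneg lam⟩)) - μ
        = 2 * ∫ x in Set.Iic (0 : ℝ), |x| ∂(gaussianReal μ ⟨lam ^ 2, sq_nonneg lam⟩)
    ∧ 2 * (∫ x in Set.Iic (0 : ℝ), |x| ∂(gaussianReal μ ⟨lam ^ 2, sq_nonneg lam⟩))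
        ≤ (2 * lam ^ 2 / μ) * Real.exp (-μ ^ 2 / (2 * lam ^ 2)) := by
  set v : ℝ≥0 := ⟨lam ^ 2, sq_nonneg lam⟩ with hvdef
  have hvpos : 0 < (v:ℝ) := by show (0:ℝ) < lam ^ 2; positivity
  have hv : v ≠ 0 := by
    intro h
    rw [h] at hvpos
    simp at hvpos
  constructor
  · rw [aux_integral_gaussian μ hv (fun x => |x|),
      aux_setIntegral_gaussian μ hv measurableSet_Iic (fun x => |x|)]
    have h := aux_eq_part μ hvpos
    rw [aux_mean μ hv] at h
    exact h
  · rw [aux_setIntegral_gaussian μ hv measurableSet_Iic (fun x => |x|)]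
    exact aux_bound μ lam hμ hlam
end

section
/- Let X₁, ..., X_n be independent real random variables with E[Xᵢ] = 0 and E|Xᵢ|^q < ∞ for some real q ≥ 2. Then there exists a constant C(q) depending only on q such that E|∑ᵢ Xᵢ|^q ≤ C(q)·[ ∑ᵢ E|Xᵢ|^q + (∑ᵢ E|Xᵢ|²)^{q/2} ]. -/
open MeasureTheory ProbabilityTheory
open scoped ENNReal NNReal


noncomputable def rosC1 (q : ℝ) : ℝ := q * 2 ^ (q - 1) + q ^ 2

lemma ros_one_dim (q : ℝ) (hq : 2 ≤ q) {s : ℝ} (hs : s ∈ Set.Icc (-1:ℝ) 1) :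
    (1 + s) ^ q ≤ 1 + q * s + rosC1 q * s ^ 2 := by
  have hq1 : (1:ℝ) ≤ q - 1 := by linarith
  have h2pos : (0:ℝ) < 2 ^ (q - 1) := Real.rpow_pos_of_pos (by norm_num) _
  set C : ℝ := rosC1 q with hC
  have hCval : C = q * 2 ^ (q - 1) + q ^ 2 := rfl
  set h : ℝ → ℝ := fun s => 1 + q * s + C * s ^ 2 - (1 + s) ^ q with hh
  -- derivative of h
  have hd : ∀ s : ℝ, -1 ≤ s →
      HasDerivAt h (q + 2 * C * s - q * (1 + s) ^ (q - 1)) s := by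
    intro s hs1
    have h1 : HasDerivAt (fun s : ℝ => 1 + s) 1 s := by
      simpa using (hasDerivAt_id s).const_add (1:ℝ)
    have h2 : HasDerivAt (fun x : ℝ => x ^ q) (q * (1 + s) ^ (q - 1)) (1 + s) :=
      Real.hasDerivAt_rpow_const (Or.inr (by linarith))
    have h3 : HasDerivAt (fun s : ℝ => (1 + s) ^ q) (q * (1 + s) ^ (q - 1) * 1) s :=
      h2.comp s h1
    have h4 : HasDerivAt (fun s : ℝ => 1 + q * s + C * s ^ 2) (q + 2 * C * s) s := by
      have : HasDerivAt (fun s : ℝ => 1 + q * s + C * s ^ 2)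
          (0 + q * 1 + C * (2 * s ^ 1)) s := by
        exact (((hasDerivAt_const s (1:ℝ)).add ((hasDerivAt_id s).const_mul q)).add
          (((hasDerivAt_pow 2 s)).const_mul C))
      convert this using 1; ring
    exact h4.sub (by simpa using h3)
  -- h 0 = 0
  have h0 : h 0 = 0 := by simp [hh]
  rw [← sub_nonneg]
  have key : 0 ≤ h s := by
    rcases le_total 0 s with hs0 | hs0
    · -- monotone on [0,1]
      have mono : MonotoneOn h (Set.Icc (0:ℝ) 1) := by
        apply monotoneOn_of_deriv_nonneg (convex_Icc 0 1)
        · intro x hx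
          exact ((hd x (by linarith [hx.1])).differentiableAt).continuousAt.continuousWithinAt
        · intro x hx
          rw [interior_Icc] at hx
          exact ((hd x (by linarith [hx.1])).differentiableAt).differentiableWithinAt
        · intro x hx
          rw [interior_Icc] at hx
          rw [(hd x (by linarith [hx.1])).deriv]
          -- chord bound
          have hqpos : (0:ℝ) < q := by linarith
          have chord : (1 + x) ^ (q - 1) ≤ (1 - x) + x * 2 ^ (q - 1) := by
            have c := (convexOn_rpow hq1).2 (by norm_num : (1:ℝ) ∈ Set.Ici (0:ℝ))
              (by norm_num : (2:ℝ) ∈ Set.Ici (0:ℝ)) (by linarith [hx.2] : 0 ≤ 1 - x)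
              (le_of_lt hx.1) (by ring)
            have e : (1 - x) • (1:ℝ) + x • (2:ℝ) = 1 + x := by
              simp [smul_eq_mul]; ring
            rw [e] at c
            simpa [Real.one_rpow, smul_eq_mul] using c
          nlinarith [mul_le_mul_of_nonneg_left chord hqpos.le,
            mul_nonneg hx.1.le (mul_nonneg hqpos.le h2pos.le),
            mul_nonneg hx.1.le (sq_nonneg q), mul_nonneg hx.1.le hqpos.le]
      have := mono (Set.left_mem_Icc.mpr (by norm_num)) ⟨hs0, hs.2⟩ hs0
      rwa [h0] at this
    · -- antitone on [-1,0]
      have anti : AntitoneOn h (Set.Icc (-1:ℝ) 0) := by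
        apply antitoneOn_of_deriv_nonpos (convex_Icc (-1) 0)
        · intro x hx
          exact ((hd x hx.1).differentiableAt).continuousAt.continuousWithinAt
        · intro x hx
          rw [interior_Icc] at hx
          exact ((hd x (le_of_lt hx.1)).differentiableAt).differentiableWithinAt
        · intro x hx
          rw [interior_Icc] at hx
          rw [(hd x (le_of_lt hx.1)).deriv]
          have bern : 1 + (q - 1) * x ≤ (1 + x) ^ (q - 1) :=
            one_add_mul_self_le_rpow_one_add (le_of_lt hx.1) hq1
          have hqpos : (0:ℝ) < q := by linarith
          nlinarith [mul_le_mul_of_nonneg_left bern hqpos.le,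
            mul_nonneg (neg_nonneg.mpr hx.2.le) (mul_nonneg hqpos.le h2pos.le),
            mul_nonneg (neg_nonneg.mpr hx.2.le) (sq_nonneg q),
            mul_nonneg (neg_nonneg.mpr hx.2.le) hqpos.le]
      have := anti ⟨hs.1, hs0⟩ (Set.right_mem_Icc.mpr (by norm_num)) hs0
      rwa [h0] at this
  simpa [hh] using key

noncomputable def rosSp (q x : ℝ) : ℝ := if x < 0 then -(|x| ^ (q - 1)) else |x| ^ (q - 1)

noncomputable def rosC2 (q : ℝ) : ℝ := rosC1 q + 2 ^ q + q

lemma rosSp_neg (q : ℝ) (hq : 2 ≤ q) (a : ℝ) : rosSp q (-a) = - rosSp q a := by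
  rcases lt_trichotomy a 0 with h | h | h
  · simp [rosSp, h, not_lt.mpr (le_of_lt (neg_pos.mpr h)), neg_pos.mpr h, abs_neg]
  · simp [rosSp, h, Real.zero_rpow (by linarith : q - 1 ≠ 0)]
  · simp [rosSp, neg_neg, h, not_lt.mpr h.le, neg_lt_zero.mpr h, abs_neg]

lemma rosSp_abs_le (q : ℝ) (a : ℝ) : |rosSp q a| ≤ |a| ^ (q - 1) := by
  unfold rosSp
  split_ifs
  · rw [abs_neg, abs_of_nonneg (Real.rpow_nonneg (abs_nonneg a) _)]
  · rw [abs_of_nonneg (Real.rpow_nonneg (abs_nonneg a) _)]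

lemma rosSp_measurable (q : ℝ) : Measurable (rosSp q) := by
  unfold rosSp
  exact Measurable.ite (measurableSet_lt measurable_id measurable_const)
    ((measurable_id.abs.pow_const _).neg) (measurable_id.abs.pow_const _)

lemma ros_mid (q : ℝ) (hq : 2 ≤ q) {a b : ℝ} (ha : 0 < a) (hb : |b| ≤ a) :
    |a + b| ^ q ≤ |a| ^ q + q * rosSp q a * b + rosC1 q * (|a| ^ (q - 2) * b ^ 2) := by
  have hb' := abs_le.mp hb
  have hab : 0 ≤ a + b := by linarith [hb'.1]
  have hs : b / a ∈ Set.Icc (-1:ℝ) 1 := by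
    constructor
    · rw [le_div_iff₀ ha]; linarith [hb'.1]
    · rw [div_le_one ha]; exact hb'.2
  have h1s : (0:ℝ) ≤ 1 + b / a := by linarith [hs.1]
  have key := ros_one_dim q hq hs
  have e1 : a + b = a * (1 + b / a) := by field_simp
  have e2 : |a + b| ^ q = a ^ q * (1 + b / a) ^ q := by
    rw [abs_of_nonneg hab, e1, Real.mul_rpow ha.le h1s]
  have haq : (0:ℝ) < a ^ q := Real.rpow_pos_of_pos ha q
  have e3 : a ^ q * (b / a) = a ^ (q - 1) * b := by
    rw [Real.rpow_sub ha, Real.rpow_one]; field_simp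
  have e4 : a ^ q * (b / a) ^ 2 = a ^ (q - 2) * b ^ 2 := by
    rw [Real.rpow_sub ha, show ((2:ℝ)) = ((2:ℕ):ℝ) by norm_num, Real.rpow_natCast]
    field_simp
  have spa : rosSp q a = a ^ (q - 1) := by
    simp [rosSp, not_lt.mpr ha.le, abs_of_pos ha]
  rw [e2, spa, abs_of_pos ha]
  calc a ^ q * (1 + b / a) ^ q ≤ a ^ q * (1 + q * (b / a) + rosC1 q * (b / a) ^ 2) :=
        mul_le_mul_of_nonneg_left key haq.le
    _ = a ^ q + q * (a ^ q * (b / a)) + rosC1 q * (a ^ q * (b / a) ^ 2) := by ring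
    _ = a ^ q + q * a ^ (q - 1) * b + rosC1 q * (a ^ (q - 2) * b ^ 2) := by
        rw [e3, e4]; ring

lemma ros_pointwise (q : ℝ) (hq : 2 ≤ q) (a b : ℝ) :
    |a + b| ^ q ≤ |a| ^ q + q * rosSp q a * b
      + rosC2 q * (|a| ^ (q - 2) * b ^ 2 + |b| ^ q) := by
  have hqpos : (0:ℝ) < q := by linarith
  have hC1 : (0:ℝ) ≤ rosC1 q := by
    have : (0:ℝ) < 2 ^ (q-1) := Real.rpow_pos_of_pos (by norm_num) _
    unfold rosC1; nlinarith
  have h2q : (0:ℝ) < 2 ^ q := Real.rpow_pos_of_pos (by norm_num) _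
  have habsq : (0:ℝ) ≤ |b| ^ q := Real.rpow_nonneg (abs_nonneg b) _
  have haqnn : (0:ℝ) ≤ |a| ^ q := Real.rpow_nonneg (abs_nonneg a) _
  have haq2 : (0:ℝ) ≤ |a| ^ (q - 2) * b ^ 2 :=
    mul_nonneg (Real.rpow_nonneg (abs_nonneg a) _) (sq_nonneg b)
  have hprod : (0:ℝ) ≤ rosC1 q * (|a| ^ (q-2) * b ^ 2) := mul_nonneg hC1 haq2
  have hprod2 : (0:ℝ) ≤ rosC1 q * |b| ^ q := mul_nonneg hC1 habsq
  have hprod3 : (0:ℝ) ≤ 2 ^ q * (|a| ^ (q-2) * b ^ 2) := mul_nonneg h2q.le haq2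
  have hprod4 : (0:ℝ) ≤ q * (|a| ^ (q-2) * b ^ 2) := mul_nonneg hqpos.le haq2
  have hprod5 : (0:ℝ) ≤ q * |b| ^ q := mul_nonneg hqpos.le habsq
  have hprod6 : (0:ℝ) ≤ 2 ^ q * |b| ^ q := mul_nonneg h2q.le habsq
  rcases le_or_gt |b| |a| with hba | hba
  · rcases lt_trichotomy a 0 with haneg | hz | hapos
    · have h := ros_mid q hq (a := -a) (b := -b) (neg_pos.mpr haneg)
        (by rw [abs_neg]; rwa [abs_of_neg haneg] at hba)
      rw [show (-a) + (-b) = -(a+b) by ring, abs_neg, abs_neg, rosSp_neg q hq, neg_sq] at h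
      unfold rosC2
      nlinarith [h]
    · subst hz
      have hb0 : b = 0 := abs_nonpos_iff.mp (by simpa using hba)
      subst hb0
      simp [Real.zero_rpow (ne_of_gt hqpos)]
      try positivity
    · have h := ros_mid q hq hapos (by rwa [abs_of_pos hapos] at hba)
      unfold rosC2
      nlinarith [h]
  · have hbpos : (0:ℝ) < |b| := lt_of_le_of_lt (abs_nonneg a) hba
    have h1 : |a + b| ^ q ≤ 2 ^ q * |b| ^ q := by
      rw [← Real.mul_rpow (by norm_num) (abs_nonneg b)]
      apply Real.rpow_le_rpow (abs_nonneg _) _ hqpos.le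
      calc |a + b| ≤ |a| + |b| := abs_add_le a b
        _ ≤ 2 * |b| := by linarith
    have h2 : |rosSp q a * b| ≤ |b| ^ q := by
      rw [abs_mul]
      calc |rosSp q a| * |b| ≤ |a| ^ (q-1) * |b| :=
            mul_le_mul_of_nonneg_right (rosSp_abs_le q a) (abs_nonneg b)
        _ ≤ |b| ^ (q-1) * |b| := by
            apply mul_le_mul_of_nonneg_right _ (abs_nonneg b)
            exact Real.rpow_le_rpow (abs_nonneg a) hba.le (by linarith)
        _ = |b| ^ q := by
            rw [← Real.rpow_add_one (ne_of_gt hbpos)]; norm_num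
    have h3 : -(q * |b| ^ q) ≤ q * rosSp q a * b := by
      have h4 : -(|b| ^ q) ≤ rosSp q a * b := (abs_le.mp h2).1
      nlinarith
    unfold rosC2
    nlinarith [h1, h3]

lemma ros_integrable_rpow {Ω : Type} [MeasurableSpace Ω] {μ : Measure Ω} [IsFiniteMeasure μ]
    {q r : ℝ} (hq : 2 ≤ q) (hr0 : 0 ≤ r) (hrq : r ≤ q) {T : Ω → ℝ}
    (hT : Measurable T) (hmem : MemLp T (ENNReal.ofReal q) μ) :
    Integrable (fun ω => |T ω| ^ r) μ := by
  have hq0 : (0:ℝ) ≤ q := by linarith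
  have hint : Integrable (fun ω => |T ω| ^ q) μ := by
    simpa [Real.norm_eq_abs, ENNReal.toReal_ofReal hq0] using
      hmem.integrable_norm_rpow (by simp [ENNReal.ofReal_eq_zero]; linarith) ENNReal.ofReal_ne_top
  apply Integrable.mono ((integrable_const (1:ℝ)).add hint)
    ((hT.abs.pow_const r).aestronglyMeasurable)
  filter_upwards with ω
  have h1 : (0:ℝ) ≤ |T ω| ^ q := Real.rpow_nonneg (abs_nonneg _) _
  have h2 : |T ω| ^ r ≤ 1 + |T ω| ^ q := by
    rcases le_total (|T ω|) 1 with h | h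
    · have := Real.rpow_le_one (abs_nonneg _) h hr0
      linarith
    · have := Real.rpow_le_rpow_of_exponent_le h hrq
      linarith
  simp only [Pi.add_apply, Real.norm_eq_abs]
  rw [abs_of_nonneg (Real.rpow_nonneg (abs_nonneg _) _),
    abs_of_nonneg (by positivity : (0:ℝ) ≤ (fun _ => (1:ℝ)) ω + |T ω| ^ q)]
  exact h2

lemma ros_integrable_sp {Ω : Type} [MeasurableSpace Ω] {μ : Measure Ω} [IsFiniteMeasure μ]
    {q : ℝ} (hq : 2 ≤ q) {T : Ω → ℝ}
    (hT : Measurable T) (hmem : MemLp T (ENNReal.ofReal q) μ) :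
    Integrable (fun ω => rosSp q (T ω)) μ := by
  apply Integrable.mono (ros_integrable_rpow hq (by linarith : (0:ℝ) ≤ q - 1) (by linarith) hT hmem)
    (((rosSp_measurable q).comp hT).aestronglyMeasurable)
  filter_upwards with ω
  rw [Real.norm_eq_abs, Real.norm_eq_abs, abs_of_nonneg (Real.rpow_nonneg (abs_nonneg _) _)]
  exact rosSp_abs_le q (T ω)

lemma ros_jensen {Ω : Type} [MeasurableSpace Ω] {μ : Measure Ω} [IsProbabilityMeasure μ]
    {q : ℝ} (hq : 2 ≤ q) {T : Ω → ℝ}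
    (hT : Measurable T) (hmem : MemLp T (ENNReal.ofReal q) μ) :
    ∫ ω, |T ω| ^ (q - 2) ∂μ ≤ (∫ ω, |T ω| ^ q ∂μ) ^ ((q - 2) / q) := by
  have hq0 : (0:ℝ) < q := by linarith
  rcases eq_or_lt_of_le hq with h2 | h2
  · subst h2
    norm_num
  · set r := q - 2 with hr
    have hrpos : (0:ℝ) < r := by rw [hr]; linarith
    have hq0' : (0:ℝ) ≤ q := by linarith
    have hrq : r ≤ q := by rw [hr]; linarith
    have hmemr : MemLp T (ENNReal.ofReal r) μ :=
      hmem.mono_exponent (ENNReal.ofReal_le_ofReal hrq)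
    have hr0 : ENNReal.ofReal r ≠ 0 := by simp [ENNReal.ofReal_eq_zero]; linarith
    have hq0'' : ENNReal.ofReal q ≠ 0 := by simp [ENNReal.ofReal_eq_zero]; linarith
    have e1 := hmemr.eLpNorm_eq_integral_rpow_norm hr0 ENNReal.ofReal_ne_top
    have e2 := hmem.eLpNorm_eq_integral_rpow_norm hq0'' ENNReal.ofReal_ne_top
    have ineq := eLpNorm_le_eLpNorm_of_exponent_le
      (ENNReal.ofReal_le_ofReal hrq) (μ := μ) hT.aestronglyMeasurable
    rw [e1, e2] at ineq
    have hIr : (0:ℝ) ≤ ∫ ω, |T ω| ^ r ∂μ :=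
      integral_nonneg fun ω => Real.rpow_nonneg (abs_nonneg _) _
    have hIq : (0:ℝ) ≤ ∫ ω, |T ω| ^ q ∂μ :=
      integral_nonneg fun ω => Real.rpow_nonneg (abs_nonneg _) _
    rw [ENNReal.toReal_ofReal hrpos.le, ENNReal.toReal_ofReal hq0'] at ineq
    simp only [Real.norm_eq_abs] at ineq
    have ineq' : (∫ ω, |T ω| ^ r ∂μ) ^ r⁻¹ ≤ (∫ ω, |T ω| ^ q ∂μ) ^ q⁻¹ := by
      rwa [ENNReal.ofReal_le_ofReal_iff (Real.rpow_nonneg hIq _)] at ineq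
    have final := Real.rpow_le_rpow (Real.rpow_nonneg hIr _) ineq' hrpos.le
    rw [← Real.rpow_mul hIr, inv_mul_cancel₀ (ne_of_gt hrpos), Real.rpow_one,
      ← Real.rpow_mul hIq] at final
    have : q⁻¹ * r = (q - 2) / q := by rw [hr]; field_simp
    rwa [this] at final

lemma ros_step {Ω : Type} [MeasurableSpace Ω] {μ : Measure Ω} [IsProbabilityMeasure μ]
    {q : ℝ} (hq : 2 ≤ q) {T Y : Ω → ℝ} (hTmeas : Measurable T) (hYmeas : Measurable Y)
    (hTmem : MemLp T (ENNReal.ofReal q) μ) (hYmem : MemLp Y (ENNReal.ofReal q) μ)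
    (hInd : IndepFun T Y μ) (hYcent : ∫ ω, Y ω ∂μ = 0) :
    ∫ ω, |T ω + Y ω| ^ q ∂μ ≤ (∫ ω, |T ω| ^ q ∂μ)
      + rosC2 q * ((∫ ω, |T ω| ^ q ∂μ) ^ ((q-2)/q) * (∫ ω, (Y ω)^2 ∂μ) + ∫ ω, |Y ω| ^ q ∂μ) := by
  have hq0 : (0:ℝ) ≤ q := by linarith
  have hp0 : ENNReal.ofReal q ≠ 0 := by simp [ENNReal.ofReal_eq_zero]; linarith
  have hp1 : (1:ℝ≥0∞) ≤ ENNReal.ofReal q := by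
    rw [← ENNReal.ofReal_one]; exact ENNReal.ofReal_le_ofReal (by linarith)
  have hp2 : (2:ℝ≥0∞) ≤ ENNReal.ofReal q := by
    rw [← ENNReal.ofReal_ofNat]; exact ENNReal.ofReal_le_ofReal hq
  have hC2 : (0:ℝ) ≤ rosC2 q := by
    have h1 : (0:ℝ) < 2 ^ (q-1) := Real.rpow_pos_of_pos (by norm_num) _
    have h2 : (0:ℝ) < 2 ^ q := Real.rpow_pos_of_pos (by norm_num) _
    unfold rosC2 rosC1; nlinarith
  -- integrability facts
  have hTq_int : Integrable (fun ω => |T ω| ^ q) μ :=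
    ros_integrable_rpow hq hq0 le_rfl hTmeas hTmem
  have hYq_int : Integrable (fun ω => |Y ω| ^ q) μ :=
    ros_integrable_rpow hq hq0 le_rfl hYmeas hYmem
  have hTY_int : Integrable (fun ω => |T ω + Y ω| ^ q) μ := by
    have := ros_integrable_rpow hq hq0 le_rfl (hTmeas.add hYmeas) (hTmem.add hYmem)
    simpa using this
  have hsp_int : Integrable (fun ω => rosSp q (T ω)) μ := ros_integrable_sp hq hTmeas hTmem
  have hTq2_int : Integrable (fun ω => |T ω| ^ (q - 2)) μ :=
    ros_integrable_rpow hq (by linarith) (by linarith) hTmeas hTmem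
  have hY_int : Integrable Y μ := hYmem.integrable hp1
  have hY2_int : Integrable (fun ω => Y ω ^ 2) μ :=
    (hYmem.mono_exponent hp2).integrable_sq
  -- independence of compositions
  have hInd1 : IndepFun (fun ω => rosSp q (T ω)) Y μ := by
    have := hInd.comp (rosSp_measurable q) measurable_id
    exact this
  have hInd2 : IndepFun (fun ω => |T ω| ^ (q - 2)) (fun ω => Y ω ^ 2) μ := by
    have := hInd.comp (measurable_id.abs.pow_const (q - 2)) (measurable_id.pow_const 2)
    exact this
  have hmul1_int : Integrable (fun ω => rosSp q (T ω) * Y ω) μ :=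
    hInd1.integrable_mul hsp_int hY_int
  have hmul2_int : Integrable (fun ω => |T ω| ^ (q - 2) * Y ω ^ 2) μ :=
    hInd2.integrable_mul hTq2_int hY2_int
  -- integral identities
  have e_zero : ∫ ω, rosSp q (T ω) * Y ω ∂μ = 0 := by
    have h := hInd1.integral_fun_mul_eq_mul_integral hsp_int.aestronglyMeasurable hY_int.aestronglyMeasurable
    calc ∫ ω, rosSp q (T ω) * Y ω ∂μ
        = (∫ ω, rosSp q (T ω) ∂μ) * ∫ ω, Y ω ∂μ := h
      _ = 0 := by rw [hYcent, mul_zero]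
  have e_prod : ∫ ω, |T ω| ^ (q - 2) * Y ω ^ 2 ∂μ
      = (∫ ω, |T ω| ^ (q - 2) ∂μ) * ∫ ω, Y ω ^ 2 ∂μ :=
    hInd2.integral_fun_mul_eq_mul_integral hTq2_int.aestronglyMeasurable hY2_int.aestronglyMeasurable
  -- pointwise bound and integration
  have bound : ∀ ω, |T ω + Y ω| ^ q ≤ |T ω| ^ q + q * rosSp q (T ω) * Y ω
      + rosC2 q * (|T ω| ^ (q - 2) * Y ω ^ 2 + |Y ω| ^ q) := fun ω =>
    ros_pointwise q hq (T ω) (Y ω)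
  have hmul1q_int : Integrable (fun ω => q * rosSp q (T ω) * Y ω) μ := by
    simpa [mul_assoc] using hmul1_int.const_mul q
  have hC2part_int : Integrable
      (fun ω => rosC2 q * (|T ω| ^ (q - 2) * Y ω ^ 2 + |Y ω| ^ q)) μ := by
    have := (hmul2_int.add hYq_int).const_mul (rosC2 q)
    simpa using this
  have i_left : Integrable (fun ω => |T ω| ^ q + q * rosSp q (T ω) * Y ω) μ := by
    have := hTq_int.add hmul1q_int
    exact this
  have intRHS : Integrable (fun ω => |T ω| ^ q + q * rosSp q (T ω) * Y ω
      + rosC2 q * (|T ω| ^ (q - 2) * Y ω ^ 2 + |Y ω| ^ q)) μ := by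
    have := i_left.add hC2part_int
    exact this
  have step1 : ∫ ω, |T ω + Y ω| ^ q ∂μ ≤ ∫ ω, (|T ω| ^ q + q * rosSp q (T ω) * Y ω
      + rosC2 q * (|T ω| ^ (q - 2) * Y ω ^ 2 + |Y ω| ^ q)) ∂μ :=
    integral_mono hTY_int intRHS bound
  have step2 : ∫ ω, (|T ω| ^ q + q * rosSp q (T ω) * Y ω
      + rosC2 q * (|T ω| ^ (q - 2) * Y ω ^ 2 + |Y ω| ^ q)) ∂μ
      = (∫ ω, |T ω| ^ q ∂μ)
        + rosC2 q * ((∫ ω, |T ω| ^ (q - 2) ∂μ) * (∫ ω, Y ω ^ 2 ∂μ) + ∫ ω, |Y ω| ^ q ∂μ) := by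
    rw [integral_add i_left hC2part_int, integral_add hTq_int hmul1q_int,
      integral_const_mul, integral_add hmul2_int hYq_int]
    have : ∫ ω, q * rosSp q (T ω) * Y ω ∂μ = 0 := by
      simp_rw [mul_assoc]
      rw [integral_const_mul, e_zero, mul_zero]
    rw [this, e_prod, add_zero]
  have jens := ros_jensen hq hTmeas hTmem
  have hσ : (0:ℝ) ≤ ∫ ω, Y ω ^ 2 ∂μ := integral_nonneg fun ω => sq_nonneg _
  calc ∫ ω, |T ω + Y ω| ^ q ∂μ
      ≤ (∫ ω, |T ω| ^ q ∂μ)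
        + rosC2 q * ((∫ ω, |T ω| ^ (q - 2) ∂μ) * (∫ ω, Y ω ^ 2 ∂μ) + ∫ ω, |Y ω| ^ q ∂μ) := by
        rw [← step2]; exact step1
    _ ≤ _ := by
        apply add_le_add_right
        apply mul_le_mul_of_nonneg_left _ hC2
        apply add_le_add_left
        exact mul_le_mul_of_nonneg_right jens hσ

lemma rosC2_nonneg (q : ℝ) (hq : 2 ≤ q) : 0 ≤ rosC2 q := by
  have h1 : (0:ℝ) < 2 ^ (q-1) := Real.rpow_pos_of_pos (by norm_num) _
  have h2 : (0:ℝ) < 2 ^ q := Real.rpow_pos_of_pos (by norm_num) _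
  unfold rosC2 rosC1; nlinarith


/-- Rosenthal's inequality: for `q ≥ 2` there exists a constant `C(q)` such that for any
independent centered random variables `X₁,...,Xₙ` with finite `q`-th moments,
`E|∑ Xᵢ|^q ≤ C(q)·(∑ E|Xᵢ|^q + (∑ E|Xᵢ|²)^(q/2))`. -/
theorem rosenthal_inequality (q : ℝ) (hq : 2 ≤ q) :
    ∃ C : ℝ, ∀ (Ω : Type) (_ : MeasurableSpace Ω) (μ : Measure Ω),
      IsProbabilityMeasure μ →
      ∀ (n : ℕ) (X : Fin n → Ω → ℝ),
        iIndepFun X μ →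
        (∀ i, Measurable (X i)) →
        (∀ i, ∫ ω, X i ω ∂μ = 0) →
        (∀ i, MemLp (X i) (ENNReal.ofReal q) μ) →
        ∫ ω, |∑ i, X i ω| ^ q ∂μ
          ≤ C * ((∑ i, ∫ ω, |X i ω| ^ q ∂μ)
              + (∑ i, ∫ ω, |X i ω| ^ 2 ∂μ) ^ (q / 2)) := by
  classical
  have hq0 : (0:ℝ) < q := by linarith
  have hθ0 : (0:ℝ) ≤ (q - 2) / q := div_nonneg (by linarith) hq0.le
  have hC2 := rosC2_nonneg q hq
  set D : ℝ := max 1 (2 * rosC2 q) with hD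
  have hD1 : (1:ℝ) ≤ D := le_max_left _ _
  have hD0 : (0:ℝ) < D := by linarith
  have hDC2 : 2 * rosC2 q ≤ D := le_max_right _ _
  refine ⟨D ^ (q / 2), ?_⟩
  intro Ω mΩ μ hμ n X hindep hmeas hcent hmem
  set K : ℝ := D ^ (q / 2) with hK
  have hK0 : (0:ℝ) < K := Real.rpow_pos_of_pos hD0 _
  set s : ℕ → Finset (Fin n) := fun m => Finset.univ.filter (fun i => (i : ℕ) < m) with hs
  set T : ℕ → Ω → ℝ := fun m => ∑ i ∈ s m, X i with hTdef
  set A : ℕ → ℝ := fun m => ∫ ω, |T m ω| ^ q ∂μ with hAdef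
  set b : Fin n → ℝ := fun i => ∫ ω, |X i ω| ^ q ∂μ with hbdef
  set v : Fin n → ℝ := fun i => ∫ ω, (X i ω) ^ 2 ∂μ with hvdef
  set B : ℝ := ∑ i, b i with hB
  set V : ℝ := ∑ i, v i with hV
  set M : ℝ := B + V ^ (q / 2) with hM
  have hbnn : ∀ i, 0 ≤ b i := fun i =>
    integral_nonneg fun ω => Real.rpow_nonneg (abs_nonneg _) _
  have hvnn : ∀ i, 0 ≤ v i := fun i => integral_nonneg fun ω => sq_nonneg _
  have hBnn : 0 ≤ B := Finset.sum_nonneg fun i _ => hbnn i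
  have hVnn : 0 ≤ V := Finset.sum_nonneg fun i _ => hvnn i
  have hVq : 0 ≤ V ^ (q / 2) := Real.rpow_nonneg hVnn _
  have hMnn : 0 ≤ M := add_nonneg hBnn hVq
  have hKM : 0 ≤ K * M := mul_nonneg hK0.le hMnn
  have hTmeas : ∀ m, Measurable (T m) := fun m => by
    simp only [hTdef]
    have heq : (∑ i ∈ s m, X i) = fun ω => ∑ i ∈ s m, X i ω := by ext ω; simp
    rw [heq]
    exact Finset.measurable_sum _ (fun i _ => hmeas i)
  have hTmem : ∀ m, MemLp (T m) (ENNReal.ofReal q) μ := fun m =>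
    memLp_finset_sum' _ (fun i _ => hmem i)
  have hAnn : ∀ m, 0 ≤ A m := fun m =>
    integral_nonneg fun ω => Real.rpow_nonneg (abs_nonneg _) _
  -- the key constant inequality
  have key : rosC2 q * ((K * M) ^ ((q - 2) / q) * V + B) ≤ K * M := by
    rcases eq_or_lt_of_le hMnn with hM0 | hMpos
    · have h0 : B + V ^ (q / 2) = 0 := by rw [← hM, ← hM0]
      have hB0 : B = 0 := by linarith
      have hVq0 : V ^ (q / 2) = 0 := by linarith
      have hV0 : V = 0 := by
        by_contra hne
        have hVpos : 0 < V := lt_of_le_of_ne hVnn (Ne.symm hne)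
        have := Real.rpow_pos_of_pos hVpos (q / 2)
        linarith
      rw [← hM0, hV0, hB0]
      simp
    · -- M > 0
      have hVle : V ≤ M ^ (2 / q) := by
        have h1 : V ^ (q / 2) ≤ M := by rw [hM]; linarith
        have h2 := Real.rpow_le_rpow hVq h1 (by positivity : (0:ℝ) ≤ 2 / q)
        have he : q / 2 * (2 / q) = 1 := by field_simp
        rwa [← Real.rpow_mul hVnn, he, Real.rpow_one] at h2
      have hKMθ : (K * M) ^ ((q - 2) / q) = K ^ ((q - 2) / q) * M ^ ((q - 2) / q) :=
        Real.mul_rpow hK0.le hMnn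
      have hMθnn : 0 ≤ M ^ ((q - 2) / q) := Real.rpow_nonneg hMnn _
      have hMθV : M ^ ((q - 2) / q) * V ≤ M := by
        calc M ^ ((q - 2) / q) * V ≤ M ^ ((q - 2) / q) * M ^ (2 / q) :=
              mul_le_mul_of_nonneg_left hVle hMθnn
          _ = M := by
              rw [← Real.rpow_add hMpos, show (q - 2) / q + 2 / q = 1 by field_simp; ring, Real.rpow_one]
      have hKθ : K ^ ((q - 2) / q) = D ^ ((q - 2) / 2) := by
        rw [hK, ← Real.rpow_mul hD0.le, show q / 2 * ((q - 2) / q) = (q - 2) / 2 by field_simp]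
      have hE1 : (1:ℝ) ≤ D ^ ((q - 2) / 2) := by
        have h := Real.rpow_le_rpow_of_exponent_le hD1
          (div_nonneg (by linarith : (0:ℝ) ≤ q - 2) (by norm_num : (0:ℝ) ≤ 2) |>
            le_trans (le_refl 0) |> fun _ => div_nonneg (by linarith) (by norm_num) :
            (0:ℝ) ≤ (q - 2) / 2)
        simpa using h
      have hKval : K = D ^ ((q - 2) / 2) * D := by
        rw [hK, show q / 2 = (q - 2) / 2 + 1 by ring, Real.rpow_add hD0, Real.rpow_one]
      have hBM : B ≤ M := by rw [hM]; linarith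
      have hEnn : (0:ℝ) ≤ D ^ ((q - 2) / 2) := by linarith
      calc rosC2 q * ((K * M) ^ ((q - 2) / q) * V + B)
          = rosC2 q * (D ^ ((q - 2) / 2) * (M ^ ((q - 2) / q) * V) + B) := by
            rw [hKMθ, hKθ]; ring
        _ ≤ rosC2 q * (D ^ ((q - 2) / 2) * M + M) := by
            apply mul_le_mul_of_nonneg_left _ hC2
            exact add_le_add (mul_le_mul_of_nonneg_left hMθV hEnn) hBM
        _ ≤ K * M := by
            rw [hKval]
            nlinarith [mul_nonneg (mul_nonneg (by linarith : (0:ℝ) ≤ D / 2 - rosC2 q)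
                (by linarith : (0:ℝ) ≤ D ^ ((q - 2) / 2))) hMnn,
              mul_nonneg (mul_nonneg (by linarith : (0:ℝ) ≤ D ^ ((q - 2) / 2) - 1)
                (by linarith : (0:ℝ) ≤ D)) hMnn]
  -- the recursion step
  have step : ∀ m : ℕ, ∀ hm : m < n,
      A (m + 1) ≤ A m + rosC2 q * ((A m) ^ ((q - 2) / q) * v ⟨m, hm⟩ + b ⟨m, hm⟩) := by
    intro m hm
    set i : Fin n := ⟨m, hm⟩ with hi
    have hnotmem : i ∉ s m := by simp [hs, hi]
    have hInd : IndepFun (T m) (X i) μ :=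
      hindep.indepFun_finsetSum_of_notMem hmeas hnotmem
    have hTsucc : T (m + 1) = T m + X i := by
      simp only [hTdef]
      have hss : s (m + 1) = insert i (s m) := by
        ext j
        simp only [hs, Finset.mem_filter, Finset.mem_univ, true_and, Finset.mem_insert,
          Fin.ext_iff, hi]
        omega
      rw [hss, Finset.sum_insert hnotmem]
      exact add_comm _ _
    have hTpt : ∀ ω, T (m + 1) ω = T m ω + X i ω := fun ω => by rw [hTsucc]; rfl
    have hstep := ros_step hq (hTmeas m) (hmeas i) (hTmem m) (hmem i) hInd (hcent i)
    calc A (m + 1) = ∫ ω, |T m ω + X i ω| ^ q ∂μ := by simp only [hAdef, hTpt]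
      _ ≤ _ := hstep
  -- nonnegativity of summands
  have hterm_nn : ∀ j : Fin n, 0 ≤ (K * M) ^ ((q - 2) / q) * v j + b j := fun j =>
    add_nonneg (mul_nonneg (Real.rpow_nonneg hKM _) (hvnn j)) (hbnn j)
  have hsum_univ : ∑ j, ((K * M) ^ ((q - 2) / q) * v j + b j)
      = (K * M) ^ ((q - 2) / q) * V + B := by
    rw [Finset.sum_add_distrib, ← Finset.mul_sum, hV, hB]
  -- main induction
  have main : ∀ m : ℕ, m ≤ n →
      A m ≤ rosC2 q * ∑ j ∈ s m, ((K * M) ^ ((q - 2) / q) * v j + b j) := by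
    intro m
    induction m with
    | zero =>
      intro _
      have hs0 : s 0 = ∅ := by ext j; simp [hs]
      simp [hAdef, hTdef, hs0, Real.zero_rpow (ne_of_gt hq0)]
    | succ m ih =>
      intro hm1
      have hm : m < n := hm1
      have ihm := ih (le_of_lt hm)
      set i : Fin n := ⟨m, hm⟩ with hi
      have hpartial : rosC2 q * ∑ j ∈ s m, ((K * M) ^ ((q - 2) / q) * v j + b j) ≤ K * M := by
        refine le_trans (mul_le_mul_of_nonneg_left
          (Finset.sum_le_sum_of_subset_of_nonneg (Finset.subset_univ _)
            (fun j _ _ => hterm_nn j)) hC2) ?_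
        rw [hsum_univ]
        exact key
      have hAmK : A m ≤ K * M := le_trans ihm hpartial
      have hmono : (A m) ^ ((q - 2) / q) ≤ (K * M) ^ ((q - 2) / q) :=
        Real.rpow_le_rpow (hAnn m) hAmK hθ0
      have hnotmem : i ∉ s m := by simp [hs, hi]
      have hss : s (m + 1) = insert i (s m) := by
        ext j
        simp only [hs, Finset.mem_filter, Finset.mem_univ, true_and, Finset.mem_insert,
          Fin.ext_iff, hi]
        omega
      calc A (m + 1) ≤ A m + rosC2 q * ((A m) ^ ((q - 2) / q) * v i + b i) := step m hm
        _ ≤ rosC2 q * ∑ j ∈ s m, ((K * M) ^ ((q - 2) / q) * v j + b j)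
            + rosC2 q * ((K * M) ^ ((q - 2) / q) * v i + b i) := by
            apply add_le_add ihm
            apply mul_le_mul_of_nonneg_left _ hC2
            exact add_le_add_left (mul_le_mul_of_nonneg_right hmono (hvnn i)) _
        _ = rosC2 q * ∑ j ∈ s (m + 1), ((K * M) ^ ((q - 2) / q) * v j + b j) := by
            rw [hss, Finset.sum_insert hnotmem]; ring
  -- conclude
  have hsn : s n = Finset.univ := by
    ext j; simp [hs, j.isLt]
  have final : A n ≤ K * M := by
    refine le_trans (main n le_rfl) ?_
    rw [hsn, hsum_univ]
    exact key
  have hgoal_lhs : ∫ ω, |∑ i, X i ω| ^ q ∂μ = A n := by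
    simp only [hAdef, hTdef, hsn]
    congr 1
    ext ω
    rw [Finset.sum_apply]
  have hgoal_rhs : (∑ i, ∫ ω, |X i ω| ^ 2 ∂μ) = V := by
    rw [hV, hvdef]
    congr 1
    ext i
    congr 1
    ext ω
    rw [sq_abs]
  rw [hgoal_lhs, hgoal_rhs]
  calc A n ≤ K * M := final
    _ = K * (B + V ^ (q / 2)) := by rw [hM]
  -- note: B is defeq fold of the sum in the goal
end
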